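/- Let k be a field of odd characteristic p and consider the chain complex computing Hochschild-style degree-2 classes: in the ℤ-graded k-vector space spanned in bidegree (1,1) by the five matrices M₁ = [[1,t],[t,t]], M₂ = [[1,t],[t,1]], M₃ = [[1,t],[1,t]], M₄ = [[1,1],[t,t]], M₅ = [[1,1],[1,t]] inside the bicomplex for the Loday construction of 𝔽_p[t]/t² over 𝔽_p with 𝔽_p coefficients on the torus S¹ × S¹, the homology in total degree 2 has dimension at most 3 over 𝔽_p. -/

import Mathlib

set_option maxSynthPendingDepth 5
set_option synthInstance.maxHeartbeats 1000000
set_option maxHeartbeats 1000000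

noncomputable section

namespace LodayTorus

/-!  An explicit model of the bicomplex computing the Loday construction
`𝓛^{𝔽_p}_{S¹ × S¹}(𝔽_p[t]/t²; 𝔽_p)`.  In bidegree `(n, m)` the entry is
`(𝔽_p[t]/t²)^{⊗ (n+1)(m+1)-1}` (a copy of `𝔽_p[t]/t²` at each simplex of
`S¹_n × S¹_m` except the basepoint `(0,0)`, which carries the coefficients `𝔽_p`).
Using the basis `{1, t}` of `𝔽_p[t]/t²`, this tensor power is the free module on
Bool-valued matrices (`true` = `t`, `false` = `1`) vanishing at the basepoint.
The horizontal/vertical face maps are the Hochschild-type face maps multiplying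
adjacent columns/rows entrywise (`t·t = 0`, and `t` acts as `0` on the coefficient
copy of `𝔽_p` at the basepoint). -/

/-- Basis of the bidegree-`(n,m)` entry of the bicomplex: matrices of `1`s (`false`) and
`t`s (`true`) indexed by `[n] × [m]`, with entry `1` at the basepoint `(0,0)`. -/
abbrev LBasis (n m : ℕ) : Type :=
  {f : Fin (n + 1) × Fin (m + 1) → Bool // f (0, 0) = false}

/-- The bidegree-`(n,m)` entry of the bicomplex: the free `k`-module on `LBasis n m`,
i.e. `(k[t]/t²)^{⊗ (n+1)(m+1)-1}` with coefficients `k` at the basepoint. -/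
abbrev LMod (k : Type) [Field k] (n m : ℕ) : Type := LBasis n m →₀ k

/-- The pair of columns multiplied together by the `i`-th horizontal face map
(the last face map wraps around, multiplying the last column into column `0`). -/
def hcols (n : ℕ) (i : Fin (n + 2)) : Fin (n + 2) × Fin (n + 2) :=
  if h : (i : ℕ) < n + 1 then (⟨(i : ℕ), by omega⟩, ⟨(i : ℕ) + 1, by omega⟩)
  else (⟨0, by omega⟩, ⟨n + 1, by omega⟩)

/-- The matrix obtained by applying the `i`-th horizontal (Hochschild-type) face map to the
basis matrix `f`: the two columns `hcols n i` are multiplied entrywise (`||` on the `{1,t}`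
pattern) and the remaining columns shift accordingly. -/
def hpattern (n m : ℕ) (i : Fin (n + 2)) (f : Fin (n + 2) × Fin (m + 1) → Bool)
    (c : Fin (n + 1)) (j : Fin (m + 1)) : Bool :=
  if h : (i : ℕ) < n + 1 then
    if (c : ℕ) < (i : ℕ) then f (⟨(c : ℕ), by omega⟩, j)
    else if (c : ℕ) = (i : ℕ) then
      f (⟨(i : ℕ), by omega⟩, j) || f (⟨(i : ℕ) + 1, by omega⟩, j)
    else f (⟨(c : ℕ) + 1, by omega⟩, j)
  else
    if (c : ℕ) = 0 then f (⟨0, by omega⟩, j) || f (⟨n + 1, by omega⟩, j)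
    else f (⟨(c : ℕ), by omega⟩, j)

variable (k : Type) [Field k]

/-- The `i`-th horizontal face map of the bicomplex.  A basis matrix is sent to the merged
matrix, or to `0` if two `t`s are multiplied (`t² = 0`) or a `t` lands on the basepoint
(where the coefficient is `k` via the augmentation `t ↦ 0`). -/
def faceH (n m : ℕ) (i : Fin (n + 2)) : LMod k (n + 1) m →ₗ[k] LMod k n m :=
  Finsupp.lift (LMod k n m) k (LBasis (n + 1) m) fun f =>
    if (∃ j, f.1 ((hcols n i).1, j) = true ∧ f.1 ((hcols n i).2, j) = true)
        ∨ hpattern n m i f.1 0 0 = true then 0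
    else Finsupp.single
      ⟨fun cj => if cj = ((0 : Fin (n + 1)), (0 : Fin (m + 1))) then false
        else hpattern n m i f.1 cj.1 cj.2, by simp⟩ 1

/-- Transposition of matrices, identifying the `(n,m)` and `(m,n)` entries. -/
def transB (n m : ℕ) : LBasis n m ≃ LBasis m n where
  toFun f := ⟨fun cj => f.1 (cj.2, cj.1), f.2⟩
  invFun f := ⟨fun cj => f.1 (cj.2, cj.1), f.2⟩
  left_inv _ := rfl
  right_inv _ := rfl

/-- Transposition as a linear equivalence of the entries of the bicomplex. -/
def transL (n m : ℕ) : LMod k n m ≃ₗ[k] LMod k m n :=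
  Finsupp.domLCongr (transB n m)

/-- The `j`-th vertical face map (the horizontal one, conjugated by transposition). -/
def faceV (n m : ℕ) (j : Fin (m + 2)) : LMod k n (m + 1) →ₗ[k] LMod k n m :=
  (transL k m n).toLinearMap ∘ₗ faceH k m n j ∘ₗ (transL k n (m + 1)).toLinearMap

/-- The horizontal differential: alternating sum of the horizontal face maps. -/
def dH (n m : ℕ) : LMod k (n + 1) m →ₗ[k] LMod k n m :=
  ∑ i : Fin (n + 2), ((-1 : k) ^ (i : ℕ)) • faceH k n m i

/-- The vertical differential: alternating sum of the vertical face maps. -/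
def dV (n m : ℕ) : LMod k n (m + 1) →ₗ[k] LMod k n m :=
  ∑ j : Fin (m + 2), ((-1 : k) ^ (j : ℕ)) • faceV k n m j

/-- The total differential from total degree 2 to total degree 1. -/
def d21 : (LMod k 0 2 × LMod k 1 1 × LMod k 2 0) →ₗ[k] (LMod k 0 1 × LMod k 1 0) :=
  LinearMap.prod
    (dV k 0 1 ∘ₗ LinearMap.fst k (LMod k 0 2) (LMod k 1 1 × LMod k 2 0)
      + dH k 0 1 ∘ₗ (LinearMap.fst k (LMod k 1 1) (LMod k 2 0) ∘ₗ
          LinearMap.snd k (LMod k 0 2) (LMod k 1 1 × LMod k 2 0)))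
    (dH k 1 0 ∘ₗ (LinearMap.snd k (LMod k 1 1) (LMod k 2 0) ∘ₗ
          LinearMap.snd k (LMod k 0 2) (LMod k 1 1 × LMod k 2 0))
      - dV k 1 0 ∘ₗ (LinearMap.fst k (LMod k 1 1) (LMod k 2 0) ∘ₗ
          LinearMap.snd k (LMod k 0 2) (LMod k 1 1 × LMod k 2 0)))

/-- The total differential from total degree 3 to total degree 2. -/
def d32 :
    (LMod k 0 3 × LMod k 1 2 × LMod k 2 1 × LMod k 3 0) →ₗ[k]
      (LMod k 0 2 × LMod k 1 1 × LMod k 2 0) :=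
  LinearMap.prod
    (dV k 0 2 ∘ₗ LinearMap.fst k (LMod k 0 3) (LMod k 1 2 × LMod k 2 1 × LMod k 3 0)
      + dH k 0 2 ∘ₗ (LinearMap.fst k (LMod k 1 2) (LMod k 2 1 × LMod k 3 0) ∘ₗ
          LinearMap.snd k (LMod k 0 3) (LMod k 1 2 × LMod k 2 1 × LMod k 3 0)))
    (LinearMap.prod
      (dH k 1 1 ∘ₗ (LinearMap.fst k (LMod k 2 1) (LMod k 3 0) ∘ₗ
          LinearMap.snd k (LMod k 1 2) (LMod k 2 1 × LMod k 3 0) ∘ₗ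
          LinearMap.snd k (LMod k 0 3) (LMod k 1 2 × LMod k 2 1 × LMod k 3 0))
        - dV k 1 1 ∘ₗ (LinearMap.fst k (LMod k 1 2) (LMod k 2 1 × LMod k 3 0) ∘ₗ
            LinearMap.snd k (LMod k 0 3) (LMod k 1 2 × LMod k 2 1 × LMod k 3 0)))
      (dH k 2 0 ∘ₗ (LinearMap.snd k (LMod k 2 1) (LMod k 3 0) ∘ₗ
          LinearMap.snd k (LMod k 1 2) (LMod k 2 1 × LMod k 3 0) ∘ₗ
          LinearMap.snd k (LMod k 0 3) (LMod k 1 2 × LMod k 2 1 × LMod k 3 0))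
        + dV k 2 0 ∘ₗ (LinearMap.fst k (LMod k 2 1) (LMod k 3 0) ∘ₗ
            LinearMap.snd k (LMod k 1 2) (LMod k 2 1 × LMod k 3 0) ∘ₗ
            LinearMap.snd k (LMod k 0 3) (LMod k 1 2 × LMod k 2 1 × LMod k 3 0))))

/-- The homology of the total complex of the bicomplex in total degree 2. -/
abbrev H2 : Type :=
  LinearMap.ker (d21 k) ⧸
    Submodule.comap (LinearMap.ker (d21 k)).subtype (LinearMap.range (d32 k))

end LodayTorus

namespace LodayTorus

variable (k : Type) [Field k]

def imgH (n m : ℕ) (i : Fin (n + 2)) (f : LBasis (n + 1) m) : LBasis n m :=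
  ⟨fun cj => if cj = ((0 : Fin (n + 1)), (0 : Fin (m + 1))) then false
    else hpattern n m i f.1 cj.1 cj.2, by simp⟩

def zeroH (n m : ℕ) (i : Fin (n + 2)) (f : LBasis (n + 1) m) : Prop :=
  (∃ j, f.1 ((hcols n i).1, j) = true ∧ f.1 ((hcols n i).2, j) = true)
    ∨ hpattern n m i f.1 0 0 = true

instance (n m : ℕ) (i : Fin (n + 2)) (f : LBasis (n + 1) m) : Decidable (zeroH n m i f) := by
  unfold zeroH; infer_instance

lemma faceH_single (n m : ℕ) (i : Fin (n + 2)) (f : LBasis (n + 1) m) :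
    faceH k n m i (Finsupp.single f 1) =
      if zeroH n m i f then 0 else Finsupp.single (imgH n m i f) 1 := by
  classical
  unfold faceH
  rw [Finsupp.lift_apply, Finsupp.sum_single_index (by simp), one_smul]
  unfold zeroH imgH
  split_ifs with h1 h2 h2 <;> first | rfl | exact absurd h1 h2 | exact absurd h2 h1 | exact (if_pos h1).symm | exact (if_neg h1).symm

def entryH (n m : ℕ) (i : Fin (n + 2)) (g : LBasis n m) (f : LBasis (n + 1) m) : ℤ :=
  if ¬ zeroH n m i f ∧ g = imgH n m i f then 1 else 0

lemma faceH_single_sum (n m : ℕ) (i : Fin (n + 2)) (f : LBasis (n + 1) m) :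
    faceH k n m i (Finsupp.single f 1)
      = ∑ g : LBasis n m, (entryH n m i g f : k) • Finsupp.single g 1 := by
  classical
  rw [faceH_single]
  by_cases h : zeroH n m i f
  · simp [entryH, h]
  · rw [if_neg h, Finset.sum_eq_single (imgH n m i f)]
    · simp [entryH, h]
    · intro b _ hb; simp [entryH, hb]
    · intro hmem; exact absurd (Finset.mem_univ _) hmem

def entryDH (n m : ℕ) (g : LBasis n m) (f : LBasis (n + 1) m) : ℤ :=
  ∑ i : Fin (n + 2), (-1) ^ (i : ℕ) * entryH n m i g f

lemma dH_single (n m : ℕ) (f : LBasis (n + 1) m) :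
    dH k n m (Finsupp.single f 1)
      = ∑ g : LBasis n m, (entryDH n m g f : k) • Finsupp.single g 1 := by
  classical
  simp only [dH, LinearMap.coe_sum, Finset.sum_apply, LinearMap.smul_apply,
    faceH_single_sum, entryDH, Finset.smul_sum, smul_smul, Int.cast_sum,
    Finset.sum_smul, Int.cast_mul, Int.cast_pow, Int.cast_neg, Int.cast_one]
  rw [Finset.sum_comm]

lemma transB_transB (n m : ℕ) (g : LBasis n m) : transB m n (transB n m g) = g := rfl

def entryDV (n m : ℕ) (g : LBasis n m) (f : LBasis n (m + 1)) : ℤ :=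
  entryDH m n (transB n m g) (transB n (m + 1) f)

lemma dV_single (n m : ℕ) (f : LBasis n (m + 1)) :
    dV k n m (Finsupp.single f 1)
      = ∑ g : LBasis n m, (entryDV n m g f : k) • Finsupp.single g 1 := by
  classical
  have hd : ∀ x, dV k n m x = transL k m n (dH k m n (transL k n (m + 1) x)) := by
    intro x
    simp only [dV, dH, faceV, LinearMap.coe_sum, Finset.sum_apply, LinearMap.smul_apply,
      LinearMap.coe_comp, Function.comp_apply, LinearEquiv.coe_coe, map_sum, map_smul]
  rw [hd]
  have h1 : transL k n (m + 1) (Finsupp.single f 1)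
      = Finsupp.single (transB n (m + 1) f) 1 := Finsupp.domLCongr_single _ _ _
  rw [h1, dH_single, map_sum]
  simp only [map_smul, transL, Finsupp.domLCongr_single]
  exact (Fintype.sum_equiv (transB n m) _ _ (fun g => by
    rw [entryDV]
    congr 1)).symm


lemma dH_single_apply (n m : ℕ) (f : LBasis (n + 1) m) (g₀ : LBasis n m) :
    dH k n m (Finsupp.single f 1) g₀ = (entryDH n m g₀ f : k) := by
  classical
  rw [dH_single, Finsupp.finset_sum_apply, Finset.sum_eq_single g₀]
  · simp
  · intro b _ hb; simp [Finsupp.single_apply, hb]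
  · intro hmem; exact absurd (Finset.mem_univ _) hmem

lemma dV_single_apply (n m : ℕ) (f : LBasis n (m + 1)) (g₀ : LBasis n m) :
    dV k n m (Finsupp.single f 1) g₀ = (entryDV n m g₀ f : k) := by
  classical
  rw [dV_single, Finsupp.finset_sum_apply, Finset.sum_eq_single g₀]
  · simp
  · intro b _ hb; simp [Finsupp.single_apply, hb]
  · intro hmem; exact absurd (Finset.mem_univ _) hmem

def castF (n m : ℕ) (v : LBasis n m → ℤ) : LMod k n m :=
  ∑ f, (v f : k) • Finsupp.single f 1

lemma castF_apply (n m : ℕ) (v : LBasis n m → ℤ) (f₀ : LBasis n m) :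
    castF k n m v f₀ = ((v f₀ : ℤ) : k) := by
  classical
  rw [castF, Finsupp.finset_sum_apply, Finset.sum_eq_single f₀]
  · simp
  · intro b _ hb; simp [Finsupp.single_apply, hb]
  · intro hmem; exact absurd (Finset.mem_univ _) hmem

lemma castF_zero (n m : ℕ) : castF k n m (fun _ => 0) = 0 := by
  simp [castF]

lemma dH_castF_apply (n m : ℕ) (v : LBasis (n + 1) m → ℤ) (g₀ : LBasis n m) :
    dH k n m (castF k (n + 1) m v) g₀ = ((∑ f, entryDH n m g₀ f * v f : ℤ) : k) := by
  classical
  rw [castF, map_sum, Finsupp.finset_sum_apply]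
  push_cast
  exact Finset.sum_congr rfl fun f _ => by
    rw [map_smul, Finsupp.smul_apply, dH_single_apply, smul_eq_mul, mul_comm]

lemma dV_castF_apply (n m : ℕ) (v : LBasis n (m + 1) → ℤ) (g₀ : LBasis n m) :
    dV k n m (castF k n (m + 1) v) g₀ = ((∑ f, entryDV n m g₀ f * v f : ℤ) : k) := by
  classical
  rw [castF, map_sum, Finsupp.finset_sum_apply]
  push_cast
  exact Finset.sum_congr rfl fun f _ => by
    rw [map_smul, Finsupp.smul_apply, dV_single_apply, smul_eq_mul, mul_comm]

/-- ℤ-level model of `d21`. -/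
def d21Z (v : (LBasis 0 2 → ℤ) × (LBasis 1 1 → ℤ) × (LBasis 2 0 → ℤ)) :
    (LBasis 0 1 → ℤ) × (LBasis 1 0 → ℤ) :=
  (fun g => (∑ f, entryDV 0 1 g f * v.1 f) + ∑ f, entryDH 0 1 g f * v.2.1 f,
   fun g => (∑ f, entryDH 1 0 g f * v.2.2 f) - ∑ f, entryDV 1 0 g f * v.2.1 f)

/-- ℤ-level model of `d32`. -/
def d32Z (v : (LBasis 0 3 → ℤ) × (LBasis 1 2 → ℤ) × (LBasis 2 1 → ℤ) × (LBasis 3 0 → ℤ)) :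
    (LBasis 0 2 → ℤ) × (LBasis 1 1 → ℤ) × (LBasis 2 0 → ℤ) :=
  (fun g => (∑ f, entryDV 0 2 g f * v.1 f) + ∑ f, entryDH 0 2 g f * v.2.1 f,
   fun g => (∑ f, entryDH 1 1 g f * v.2.2.1 f) - ∑ f, entryDV 1 1 g f * v.2.1 f,
   fun g => (∑ f, entryDH 2 0 g f * v.2.2.2 f) + ∑ f, entryDV 2 0 g f * v.2.2.1 f)

def castF2 (v : (LBasis 0 2 → ℤ) × (LBasis 1 1 → ℤ) × (LBasis 2 0 → ℤ)) :
    LMod k 0 2 × LMod k 1 1 × LMod k 2 0 :=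
  (castF k 0 2 v.1, castF k 1 1 v.2.1, castF k 2 0 v.2.2)

def castF1 (v : (LBasis 0 1 → ℤ) × (LBasis 1 0 → ℤ)) : LMod k 0 1 × LMod k 1 0 :=
  (castF k 0 1 v.1, castF k 1 0 v.2)

def castF3 (v : (LBasis 0 3 → ℤ) × (LBasis 1 2 → ℤ) × (LBasis 2 1 → ℤ) × (LBasis 3 0 → ℤ)) :
    LMod k 0 3 × LMod k 1 2 × LMod k 2 1 × LMod k 3 0 :=
  (castF k 0 3 v.1, castF k 1 2 v.2.1, castF k 2 1 v.2.2.1, castF k 3 0 v.2.2.2)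

lemma d21_castF_1 (v) : (d21 k (castF2 k v)).1 = (castF1 k (d21Z v)).1 := by
  classical
  unfold d21 castF2 castF1 d21Z
  ext g₀
  dsimp only [LinearMap.prod_apply, LinearMap.coe_prod, Function.prod, LinearMap.add_apply, LinearMap.sub_apply,
    LinearMap.coe_comp, Function.comp_apply, LinearMap.fst_apply, LinearMap.snd_apply]
  rw [Finsupp.add_apply]
  erw [dV_castF_apply]
  erw [dH_castF_apply]
  erw [castF_apply]
  push_cast
  ring

lemma d21_castF_2 (v) : (d21 k (castF2 k v)).2 = (castF1 k (d21Z v)).2 := by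
  classical
  unfold d21 castF2 castF1 d21Z
  ext g₀
  dsimp only [LinearMap.prod_apply, LinearMap.coe_prod, Function.prod, LinearMap.add_apply, LinearMap.sub_apply,
    LinearMap.coe_comp, Function.comp_apply, LinearMap.fst_apply, LinearMap.snd_apply]
  rw [Finsupp.sub_apply]
  erw [dH_castF_apply]
  erw [dV_castF_apply]
  erw [castF_apply]
  push_cast
  ring

lemma d21_castF (v) : d21 k (castF2 k v) = castF1 k (d21Z v) :=
  Prod.ext (d21_castF_1 k v) (d21_castF_2 k v)

lemma d32_castF_1 (v) : (d32 k (castF3 k v)).1 = (castF2 k (d32Z v)).1 := by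
  classical
  unfold d32 castF3 castF2 d32Z
  ext g₀
  dsimp only [LinearMap.prod_apply, LinearMap.coe_prod, Function.prod, LinearMap.add_apply, LinearMap.sub_apply,
    LinearMap.coe_comp, Function.comp_apply, LinearMap.fst_apply, LinearMap.snd_apply]
  rw [Finsupp.add_apply]
  erw [dV_castF_apply]
  erw [dH_castF_apply]
  erw [castF_apply]
  push_cast
  ring

lemma d32_castF_2 (v) : (d32 k (castF3 k v)).2.1 = (castF2 k (d32Z v)).2.1 := by
  classical
  unfold d32 castF3 castF2 d32Z
  ext g₀
  dsimp only [LinearMap.prod_apply, LinearMap.coe_prod, Function.prod, LinearMap.add_apply, LinearMap.sub_apply,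
    LinearMap.coe_comp, Function.comp_apply, LinearMap.fst_apply, LinearMap.snd_apply]
  rw [Finsupp.sub_apply]
  erw [dH_castF_apply]
  erw [dV_castF_apply]
  erw [castF_apply]
  push_cast
  ring

lemma d32_castF_3 (v) : (d32 k (castF3 k v)).2.2 = (castF2 k (d32Z v)).2.2 := by
  classical
  unfold d32 castF3 castF2 d32Z
  ext g₀
  dsimp only [LinearMap.prod_apply, LinearMap.coe_prod, Function.prod, LinearMap.add_apply, LinearMap.sub_apply,
    LinearMap.coe_comp, Function.comp_apply, LinearMap.fst_apply, LinearMap.snd_apply]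
  rw [Finsupp.add_apply]
  erw [dH_castF_apply]
  erw [dV_castF_apply]
  erw [castF_apply]
  push_cast
  ring

lemma d32_castF (v) : d32 k (castF3 k v) = castF2 k (d32Z v) :=
  Prod.ext (d32_castF_1 k v) (Prod.ext (d32_castF_2 k v) (d32_castF_3 k v))

instance instLModFinite (n m : ℕ) : Module.Finite k (LMod k n m) :=
  Module.Finite.equiv (Finsupp.linearEquivFunOnFinite k k (LBasis n m)).symm

def enc (n m : ℕ) (f : LBasis n m) : ℕ :=
  ∑ cj : Fin (n + 1) × Fin (m + 1), if f.1 cj then 2 ^ ((cj.1 : ℕ) * (m + 1) + (cj.2 : ℕ)) else 0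

def ofL (n m : ℕ) (l : List ℤ) : LBasis n m → ℤ := fun f => l.getD (enc n m f) 0

def bAt (n m : ℕ) (e : ℕ) (h : e % 2 = 0) : LBasis n m :=
  ⟨fun cj => decide ((e >>> ((cj.1 : ℕ) * (m + 1) + (cj.2 : ℕ))) % 2 = 1), by
    simp only [Fin.val_zero, Nat.zero_mul, Nat.add_zero, Nat.shiftRight_zero, Nat.zero_add,
      decide_eq_false_iff_not]
    omega⟩

def Y0v : (LBasis 0 3 → ℤ) × (LBasis 1 2 → ℤ) × (LBasis 2 1 → ℤ) × (LBasis 3 0 → ℤ) :=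
  (ofL 0 3 [0, 0, 0, 0, 0, 0, 0, 0, 2, 0, 0, 0, 0, 0, 0, 0], ofL 1 2 [0, 0, 0, 0, 0, 0, 0, 0, 0, 0, 0, 0, 0, 0, 0, 0, 0, 0, 0, 0, 0, 0, 0, 0, 0, 0, 0, 0, 0, 0, 0, 0, 0, 0, 0, 0, 0, 0, 0, 0, 0, 0, 0, 0, 0, 0, 0, 0, 0, 0, 0, 0, 0, 0, 0, 0, 0, 0, 0, 0, 0, 0, 0, 0], ofL 2 1 [0, 0, 0, 0, 0, 0, 0, 0, 0, 0, 0, 0, 0, 0, 0, 0, 0, 0, 0, 0, 0, 0, 0, 0, 0, 0, 0, 0, 0, 0, 0, 0, 0, 0, 0, 0, 0, 0, 0, 0, 0, 0, 0, 0, 0, 0, 0, 0, 0, 0, 0, 0, 0, 0, 0, 0, 0, 0, 0, 0, 0, 0, 0, 0], ofL 3 0 [0, 0, 0, 0, 0, 0, 0, 0, 0, 0, 0, 0, 0, 0, 0, 0])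

def W0v : (LBasis 0 2 → ℤ) × (LBasis 1 1 → ℤ) × (LBasis 2 0 → ℤ) :=
  (ofL 0 2 [0, 0, 0, 0, 2, 0, 0, 0], ofL 1 1 [0, 0, 0, 0, 0, 0, 0, 0, 0, 0, 0, 0, 0, 0, 0, 0], ofL 2 0 [0, 0, 0, 0, 0, 0, 0, 0])

lemma hD1_0 : d32Z Y0v = W0v := by decide

lemma hD2_0 : d21Z W0v = (fun _ => 0, fun _ => 0) := by decide

def Y1v : (LBasis 0 3 → ℤ) × (LBasis 1 2 → ℤ) × (LBasis 2 1 → ℤ) × (LBasis 3 0 → ℤ) :=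
  (ofL 0 3 [0, 0, -2, 0, 0, 0, 0, 0, 0, 0, 0, 0, 0, 0, 0, 0], ofL 1 2 [0, 0, 0, 0, 0, 0, 0, 0, 0, 0, 0, 0, 0, 0, 0, 0, 0, 0, 0, 0, 0, 0, 0, 0, 0, 0, 0, 0, 0, 0, 0, 0, 0, 0, 0, 0, 0, 0, 0, 0, 0, 0, 0, 0, 0, 0, 0, 0, 0, 0, 0, 0, 0, 0, 0, 0, 0, 0, 0, 0, 0, 0, 0, 0], ofL 2 1 [0, 0, 0, 0, 0, 0, 0, 0, 0, 0, 0, 0, 0, 0, 0, 0, 0, 0, 0, 0, 0, 0, 0, 0, 0, 0, 0, 0, 0, 0, 0, 0, 0, 0, 0, 0, 0, 0, 0, 0, 0, 0, 0, 0, 0, 0, 0, 0, 0, 0, 0, 0, 0, 0, 0, 0, 0, 0, 0, 0, 0, 0, 0, 0], ofL 3 0 [0, 0, 0, 0, 0, 0, 0, 0, 0, 0, 0, 0, 0, 0, 0, 0])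

def W1v : (LBasis 0 2 → ℤ) × (LBasis 1 1 → ℤ) × (LBasis 2 0 → ℤ) :=
  (ofL 0 2 [0, 0, 2, 0, 0, 0, 0, 0], ofL 1 1 [0, 0, 0, 0, 0, 0, 0, 0, 0, 0, 0, 0, 0, 0, 0, 0], ofL 2 0 [0, 0, 0, 0, 0, 0, 0, 0])

lemma hD1_1 : d32Z Y1v = W1v := by decide

lemma hD2_1 : d21Z W1v = (fun _ => 0, fun _ => 0) := by decide

def Y2v : (LBasis 0 3 → ℤ) × (LBasis 1 2 → ℤ) × (LBasis 2 1 → ℤ) × (LBasis 3 0 → ℤ) :=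
  (ofL 0 3 [0, 0, 0, 0, 0, 0, 0, 0, 0, 0, 0, 0, 0, 0, 0, 0], ofL 1 2 [-2, 0, 0, 0, 0, 0, 0, 0, 0, 0, 0, 0, 0, 0, 0, 0, 0, 0, 0, 0, 0, 0, 0, 0, 0, 0, 0, 0, 0, 0, 0, 0, 0, 0, 0, 0, 0, 0, 0, 0, 0, 0, 0, 0, 0, 0, 0, 0, 0, 0, 0, 0, 0, 0, 0, 0, 0, 0, 0, 0, 0, 0, 0, 0], ofL 2 1 [0, 0, 0, 0, 0, 0, 0, 0, 0, 0, 0, 0, 0, 0, 0, 0, 0, 0, 0, 0, 0, 0, 0, 0, 0, 0, 0, 0, 0, 0, 0, 0, 0, 0, 0, 0, 0, 0, 0, 0, 0, 0, 0, 0, 0, 0, 0, 0, 0, 0, 0, 0, 0, 0, 0, 0, 0, 0, 0, 0, 0, 0, 0, 0], ofL 3 0 [0, 0, 0, 0, 0, 0, 0, 0, 0, 0, 0, 0, 0, 0, 0, 0])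

def W2v : (LBasis 0 2 → ℤ) × (LBasis 1 1 → ℤ) × (LBasis 2 0 → ℤ) :=
  (ofL 0 2 [0, 0, 0, 0, 0, 0, 0, 0], ofL 1 1 [2, 0, 0, 0, 0, 0, 0, 0, 0, 0, 0, 0, 0, 0, 0, 0], ofL 2 0 [0, 0, 0, 0, 0, 0, 0, 0])

lemma hD1_2 : d32Z Y2v = W2v := by decide

lemma hD2_2 : d21Z W2v = (fun _ => 0, fun _ => 0) := by decide

def Y3v : (LBasis 0 3 → ℤ) × (LBasis 1 2 → ℤ) × (LBasis 2 1 → ℤ) × (LBasis 3 0 → ℤ) :=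
  (ofL 0 3 [0, 0, 0, 0, 0, 0, 0, 0, 0, 0, 0, 0, 0, 0, 0, 0], ofL 1 2 [0, 0, 0, 0, 0, 0, 0, 0, 0, 0, 0, 0, 0, 0, 0, 0, 0, 0, 0, 0, 0, 0, 0, 0, 0, 0, 0, 0, 0, 0, 0, 0, -2, 0, 0, 0, 0, 0, 0, 0, 0, 0, 0, 0, 0, 0, 0, 0, 0, 0, 0, 0, 0, 0, 0, 0, 0, 0, 0, 0, 0, 0, 0, 0], ofL 2 1 [0, 0, 0, 0, 0, 0, 0, 0, 0, 0, 0, 0, 0, 0, 0, 0, 0, 0, 0, 0, 0, 0, 0, 0, 0, 0, 0, 0, 0, 0, 0, 0, 0, 0, 0, 0, 0, 0, 0, 0, 0, 0, 0, 0, 0, 0, 0, 0, 0, 0, 0, 0, 0, 0, 0, 0, 0, 0, 0, 0, 0, 0, 0, 0], ofL 3 0 [0, 0, 0, 0, 0, 0, 0, 0, 0, 0, 0, 0, 0, 0, 0, 0])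

def W3v : (LBasis 0 2 → ℤ) × (LBasis 1 1 → ℤ) × (LBasis 2 0 → ℤ) :=
  (ofL 0 2 [0, 0, 0, 0, 0, 0, 0, 0], ofL 1 1 [0, 0, 0, 0, 2, 0, 0, 0, 0, 0, 0, 0, 0, 0, 0, 0], ofL 2 0 [0, 0, 0, 0, 0, 0, 0, 0])

lemma hD1_3 : d32Z Y3v = W3v := by decide

lemma hD2_3 : d21Z W3v = (fun _ => 0, fun _ => 0) := by decide

def Y4v : (LBasis 0 3 → ℤ) × (LBasis 1 2 → ℤ) × (LBasis 2 1 → ℤ) × (LBasis 3 0 → ℤ) :=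
  (ofL 0 3 [0, 0, 0, 0, 0, 0, 0, 0, 0, 0, 0, 0, 0, 0, 0, 0], ofL 1 2 [0, 0, 0, 0, 0, 0, 0, 0, 0, 0, 0, 0, 0, 0, 0, 0, 0, 0, 0, 0, 0, 0, 0, 0, 0, 0, 0, 0, 0, 0, 0, 0, 0, 0, 0, 0, 0, 0, 0, 0, 0, 0, 0, 0, 0, 0, 0, 0, -1, 0, 0, 0, 0, 0, 0, 0, 0, 0, 0, 0, 0, 0, 0, 0], ofL 2 1 [0, 0, 0, 0, 0, 0, 0, 0, 0, 0, 0, 0, 0, 0, 0, 0, 0, 0, 0, 0, 0, 0, 0, 0, 0, 0, 0, 0, 0, 0, 0, 0, 0, 0, 0, 0, 0, 0, 0, 0, 0, 0, 0, 0, 0, 0, 0, 0, 0, 0, 0, 0, 0, 0, 0, 0, 0, 0, 0, 0, 0, 0, 0, 0], ofL 3 0 [0, 0, 0, 0, 0, 0, 0, 0, 0, 0, 0, 0, 0, 0, 0, 0])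

def W4v : (LBasis 0 2 → ℤ) × (LBasis 1 1 → ℤ) × (LBasis 2 0 → ℤ) :=
  (ofL 0 2 [0, 0, 0, 0, 0, 0, 0, 0], ofL 1 1 [0, 0, 0, 0, 0, 0, 0, 0, 0, 0, 0, 0, 2, 0, 0, 0], ofL 2 0 [0, 0, 0, 0, 0, 0, 0, 0])

lemma hD1_4 : d32Z Y4v = W4v := by decide

lemma hD2_4 : d21Z W4v = (fun _ => 0, fun _ => 0) := by decide

def Y5v : (LBasis 0 3 → ℤ) × (LBasis 1 2 → ℤ) × (LBasis 2 1 → ℤ) × (LBasis 3 0 → ℤ) :=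
  (ofL 0 3 [0, 0, 0, 0, 0, 0, 0, 0, 0, 0, 0, 0, 0, 0, 0, 0], ofL 1 2 [0, 0, 0, 0, 0, 0, 0, 0, 0, 0, 0, 0, 0, 0, 0, 0, 0, 0, 0, 0, 0, 0, 0, 0, 0, 0, 0, 0, 0, 0, 0, 0, 0, 0, 0, 0, 0, 0, 0, 0, 0, 0, 0, 0, 0, 0, 0, 0, 0, 0, 0, 0, 0, 0, 0, 0, 0, 0, 0, 0, 0, 0, 0, 0], ofL 2 1 [0, 0, 0, 0, 0, 0, 0, 0, 0, 0, 0, 0, 0, 0, 0, 0, 0, 0, 0, 0, 0, 0, 0, 0, 0, 0, 0, 0, 0, 0, 0, 0, 2, 0, 0, 0, 0, 0, 0, 0, 0, 0, 0, 0, 0, 0, 0, 0, 0, 0, 0, 0, 0, 0, 0, 0, 0, 0, 0, 0, 0, 0, 0, 0], ofL 3 0 [0, 0, 0, 0, 0, 0, 0, 0, 0, 0, 0, 0, 0, 0, 0, 0])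

def W5v : (LBasis 0 2 → ℤ) × (LBasis 1 1 → ℤ) × (LBasis 2 0 → ℤ) :=
  (ofL 0 2 [0, 0, 0, 0, 0, 0, 0, 0], ofL 1 1 [0, 0, 2, 0, 0, 0, 0, 0, 0, 0, 0, 0, 0, 0, 0, 0], ofL 2 0 [0, 0, 0, 0, 0, 0, 0, 0])

lemma hD1_5 : d32Z Y5v = W5v := by decide

lemma hD2_5 : d21Z W5v = (fun _ => 0, fun _ => 0) := by decide

def Y6v : (LBasis 0 3 → ℤ) × (LBasis 1 2 → ℤ) × (LBasis 2 1 → ℤ) × (LBasis 3 0 → ℤ) :=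
  (ofL 0 3 [0, 0, 0, 0, 0, 0, 0, 0, 0, 0, 0, 0, 0, 0, 0, 0], ofL 1 2 [0, 0, 0, 0, 0, 0, 0, 0, 0, 0, 0, 0, 0, 0, 0, 0, 0, 0, 0, 0, 2, 0, 0, 0, 0, 0, 0, 0, 0, 0, 0, 0, 0, 0, 0, 0, 0, 0, 0, 0, 0, 0, 0, 0, 0, 0, 0, 0, -1, 0, 0, 0, 0, 0, 0, 0, 0, 0, 0, 0, 0, 0, 0, 0], ofL 2 1 [0, 0, 0, 0, 0, 0, 0, 0, 0, 0, 0, 0, 0, 0, 0, 0, 0, 0, 0, 0, 0, 0, 0, 0, 2, 0, 0, 0, 0, 0, 0, 0, 0, 0, 0, 0, 0, 0, 0, 0, 0, 0, 0, 0, 0, 0, 0, 0, 0, 0, 0, 0, 0, 0, 0, 0, 0, 0, 0, 0, 0, 0, 0, 0], ofL 3 0 [0, 0, 0, 0, 0, 0, 0, 0, 0, 0, 0, 0, 0, 0, 0, 0])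

def W6v : (LBasis 0 2 → ℤ) × (LBasis 1 1 → ℤ) × (LBasis 2 0 → ℤ) :=
  (ofL 0 2 [0, 0, 0, 0, 0, 0, 0, 0], ofL 1 1 [0, 0, 0, 0, 0, 0, 0, 0, 0, 0, 2, 0, 0, 0, 0, 0], ofL 2 0 [0, 0, 0, 0, 0, 0, 0, 0])

lemma hD1_6 : d32Z Y6v = W6v := by decide

lemma hD2_6 : d21Z W6v = (fun _ => 0, fun _ => 0) := by decide

def Y7v : (LBasis 0 3 → ℤ) × (LBasis 1 2 → ℤ) × (LBasis 2 1 → ℤ) × (LBasis 3 0 → ℤ) :=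
  (ofL 0 3 [0, 0, 0, 0, 0, 0, 0, 0, 0, 0, 0, 0, 0, 0, 0, 0], ofL 1 2 [0, 0, 0, 0, 0, 0, 0, 0, 0, 0, 0, 0, 0, 0, 0, 0, 0, 0, 0, 0, 0, 0, 0, 0, 0, 0, 0, 0, 0, 0, 0, 0, 0, 0, 0, 0, 0, 0, 0, 0, 0, 0, 0, 0, 0, 0, 0, 0, -1, 0, 0, 0, 0, 0, 0, 0, 0, 0, 0, 0, 0, 0, 0, 0], ofL 2 1 [0, 0, 0, 0, 0, 0, 0, 0, 0, 0, 0, 0, 0, 0, 0, 0, 0, 0, 0, 0, 0, 0, 0, 0, 2, 0, 0, 0, 0, 0, 0, 0, 0, 0, 0, 0, 0, 0, 0, 0, 0, 0, 0, 0, 0, 0, 0, 0, 0, 0, 0, 0, 0, 0, 0, 0, 0, 0, 0, 0, 0, 0, 0, 0], ofL 3 0 [0, 0, 0, 0, 0, 0, 0, 0, 0, 0, 0, 0, 0, 0, 0, 0])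

def W7v : (LBasis 0 2 → ℤ) × (LBasis 1 1 → ℤ) × (LBasis 2 0 → ℤ) :=
  (ofL 0 2 [0, 0, 0, 0, 0, 0, 0, 0], ofL 1 1 [0, 0, 0, 0, 0, 0, 2, 0, 0, 0, 0, 0, 0, 0, 0, 0], ofL 2 0 [0, 0, 0, 0, 0, 0, 0, 0])

lemma hD1_7 : d32Z Y7v = W7v := by decide

lemma hD2_7 : d21Z W7v = (fun _ => 0, fun _ => 0) := by decide

def Y8v : (LBasis 0 3 → ℤ) × (LBasis 1 2 → ℤ) × (LBasis 2 1 → ℤ) × (LBasis 3 0 → ℤ) :=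
  (ofL 0 3 [0, 0, 0, 0, 0, 0, 0, 0, 0, 0, 0, 0, 0, 0, 0, 0], ofL 1 2 [0, 0, 0, 0, 0, 0, 0, 0, 0, 0, 0, 0, 0, 0, 0, 0, 0, 0, 0, 0, 0, 0, 0, 0, 0, 0, 0, 0, 0, 0, 0, 0, 0, 0, 0, 0, 0, 0, 0, 0, 0, 0, 0, 0, 0, 0, 0, 0, 0, 0, 0, 0, -2, 0, 0, 0, 0, 0, 0, 0, 0, 0, 0, 0], ofL 2 1 [0, 0, 0, 0, 0, 0, 0, 0, 0, 0, 0, 0, 0, 0, 0, 0, 0, 0, 0, 0, 0, 0, 0, 0, 0, 0, 0, 0, 0, 0, 0, 0, 0, 0, 0, 0, 0, 0, 0, 0, 0, 0, 0, 0, 0, 0, 0, 0, 0, 0, 0, 0, 0, 0, 0, 0, 0, 0, 0, 0, 0, 0, 0, 0], ofL 3 0 [0, 0, 0, 0, 0, 0, 0, 0, 0, 0, 0, 0, 0, 0, 0, 0])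

def W8v : (LBasis 0 2 → ℤ) × (LBasis 1 1 → ℤ) × (LBasis 2 0 → ℤ) :=
  (ofL 0 2 [0, 0, 0, 0, 0, 0, 0, 0], ofL 1 1 [0, 0, 0, 0, 0, 0, 0, 0, 0, 0, 0, 0, 0, 0, 2, 0], ofL 2 0 [0, 0, 0, 0, 0, 0, 0, 0])

lemma hD1_8 : d32Z Y8v = W8v := by decide

lemma hD2_8 : d21Z W8v = (fun _ => 0, fun _ => 0) := by decide

def Y9v : (LBasis 0 3 → ℤ) × (LBasis 1 2 → ℤ) × (LBasis 2 1 → ℤ) × (LBasis 3 0 → ℤ) :=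
  (ofL 0 3 [0, 0, 0, 0, 0, 0, 0, 0, 0, 0, 0, 0, 0, 0, 0, 0], ofL 1 2 [0, 0, 0, 0, 0, 0, 0, 0, 0, 0, 0, 0, 0, 0, 0, 0, 0, 0, 0, 0, 0, 0, 0, 0, 0, 0, 0, 0, 0, 0, 0, 0, 0, 0, 0, 0, 0, 0, 0, 0, 0, 0, 0, 0, 0, 0, 0, 0, 0, 0, 0, 0, 0, 0, 0, 0, 0, 0, 0, 0, 0, 0, 0, 0], ofL 2 1 [0, 0, 0, 0, 0, 0, 0, 0, 0, 0, 0, 0, 0, 0, 0, 0, 0, 0, 0, 0, 0, 0, 0, 0, 0, 0, 0, 0, 0, 0, 0, 0, 0, 0, 0, 0, 0, 0, 0, 0, 0, 0, 0, 0, 0, 0, 0, 0, 0, 0, 0, 0, 0, 0, 0, 0, 0, 0, 0, 0, 0, 0, 0, 0], ofL 3 0 [0, 0, 0, 0, 0, 0, 0, 0, 2, 0, 0, 0, 0, 0, 0, 0])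

def W9v : (LBasis 0 2 → ℤ) × (LBasis 1 1 → ℤ) × (LBasis 2 0 → ℤ) :=
  (ofL 0 2 [0, 0, 0, 0, 0, 0, 0, 0], ofL 1 1 [0, 0, 0, 0, 0, 0, 0, 0, 0, 0, 0, 0, 0, 0, 0, 0], ofL 2 0 [0, 0, 0, 0, 2, 0, 0, 0])

lemma hD1_9 : d32Z Y9v = W9v := by decide

lemma hD2_9 : d21Z W9v = (fun _ => 0, fun _ => 0) := by decide

def Y10v : (LBasis 0 3 → ℤ) × (LBasis 1 2 → ℤ) × (LBasis 2 1 → ℤ) × (LBasis 3 0 → ℤ) :=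
  (ofL 0 3 [0, 0, 0, 0, 0, 0, 0, 0, 0, 0, 0, 0, 0, 0, 0, 0], ofL 1 2 [0, 0, 0, 0, 0, 0, 0, 0, 0, 0, 0, 0, 0, 0, 0, 0, 0, 0, 0, 0, 0, 0, 0, 0, 0, 0, 0, 0, 0, 0, 0, 0, 0, 0, 0, 0, 0, 0, 0, 0, 0, 0, 0, 0, 0, 0, 0, 0, 0, 0, 0, 0, 0, 0, 0, 0, 0, 0, 0, 0, 0, 0, 0, 0], ofL 2 1 [0, 0, 0, 0, 0, 0, 0, 0, 0, 0, 0, 0, 0, 0, 0, 0, 0, 0, 0, 0, 0, 0, 0, 0, 0, 0, 0, 0, 0, 0, 0, 0, 0, 0, 0, 0, 0, 0, 0, 0, 0, 0, 0, 0, 0, 0, 0, 0, 0, 0, 0, 0, 0, 0, 0, 0, 0, 0, 0, 0, 0, 0, 0, 0], ofL 3 0 [0, 0, -2, 0, 0, 0, 0, 0, 0, 0, 0, 0, 0, 0, 0, 0])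

def W10v : (LBasis 0 2 → ℤ) × (LBasis 1 1 → ℤ) × (LBasis 2 0 → ℤ) :=
  (ofL 0 2 [0, 0, 0, 0, 0, 0, 0, 0], ofL 1 1 [0, 0, 0, 0, 0, 0, 0, 0, 0, 0, 0, 0, 0, 0, 0, 0], ofL 2 0 [0, 0, 2, 0, 0, 0, 0, 0])

lemma hD1_10 : d32Z Y10v = W10v := by decide

lemma hD2_10 : d21Z W10v = (fun _ => 0, fun _ => 0) := by decide

def Yv : Fin 11 → (LBasis 0 3 → ℤ) × (LBasis 1 2 → ℤ) × (LBasis 2 1 → ℤ) × (LBasis 3 0 → ℤ) :=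
  ![Y0v, Y1v, Y2v, Y3v, Y4v, Y5v, Y6v, Y7v, Y8v, Y9v, Y10v]

def Wv : Fin 11 → (LBasis 0 2 → ℤ) × (LBasis 1 1 → ℤ) × (LBasis 2 0 → ℤ) :=
  ![W0v, W1v, W2v, W3v, W4v, W5v, W6v, W7v, W8v, W9v, W10v]

lemma hD1 : ∀ i : Fin 11, d32Z (Yv i) = Wv i := by
  intro i; fin_cases i
  exacts [hD1_0, hD1_1, hD1_2, hD1_3, hD1_4, hD1_5, hD1_6, hD1_7, hD1_8, hD1_9, hD1_10]

lemma hD2 : ∀ i : Fin 11, d21Z (Wv i) = (fun _ => 0, fun _ => 0) := by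
  intro i; fin_cases i
  exacts [hD2_0, hD2_1, hD2_2, hD2_3, hD2_4, hD2_5, hD2_6, hD2_7, hD2_8, hD2_9, hD2_10]

def coordZ (w : (LBasis 0 2 → ℤ) × (LBasis 1 1 → ℤ) × (LBasis 2 0 → ℤ)) : Fin 11 → ℤ
  | ⟨0, _⟩ => w.1 (bAt 0 2 4 rfl)
  | ⟨1, _⟩ => w.1 (bAt 0 2 2 rfl)
  | ⟨2, _⟩ => w.2.1 (bAt 1 1 0 rfl)
  | ⟨3, _⟩ => w.2.1 (bAt 1 1 4 rfl)
  | ⟨4, _⟩ => w.2.1 (bAt 1 1 12 rfl)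
  | ⟨5, _⟩ => w.2.1 (bAt 1 1 2 rfl)
  | ⟨6, _⟩ => w.2.1 (bAt 1 1 10 rfl)
  | ⟨7, _⟩ => w.2.1 (bAt 1 1 6 rfl)
  | ⟨8, _⟩ => w.2.1 (bAt 1 1 14 rfl)
  | ⟨9, _⟩ => w.2.2 (bAt 2 0 4 rfl)
  | ⟨10, _⟩ => w.2.2 (bAt 2 0 2 rfl)

lemma hD3 : ∀ i j : Fin 11, coordZ (Wv i) j = if j = i then 2 else 0 := by decide

def coordF : Fin 11 → ((LMod k 0 2 × LMod k 1 1 × LMod k 2 0) →ₗ[k] k)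
  | ⟨0, _⟩ => Finsupp.lapply (bAt 0 2 4 rfl) ∘ₗ LinearMap.fst k (LMod k 0 2) (LMod k 1 1 × LMod k 2 0)
  | ⟨1, _⟩ => Finsupp.lapply (bAt 0 2 2 rfl) ∘ₗ LinearMap.fst k (LMod k 0 2) (LMod k 1 1 × LMod k 2 0)
  | ⟨2, _⟩ => Finsupp.lapply (bAt 1 1 0 rfl) ∘ₗ LinearMap.fst k (LMod k 1 1) (LMod k 2 0) ∘ₗ LinearMap.snd k (LMod k 0 2) (LMod k 1 1 × LMod k 2 0)
  | ⟨3, _⟩ => Finsupp.lapply (bAt 1 1 4 rfl) ∘ₗ LinearMap.fst k (LMod k 1 1) (LMod k 2 0) ∘ₗ LinearMap.snd k (LMod k 0 2) (LMod k 1 1 × LMod k 2 0)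
  | ⟨4, _⟩ => Finsupp.lapply (bAt 1 1 12 rfl) ∘ₗ LinearMap.fst k (LMod k 1 1) (LMod k 2 0) ∘ₗ LinearMap.snd k (LMod k 0 2) (LMod k 1 1 × LMod k 2 0)
  | ⟨5, _⟩ => Finsupp.lapply (bAt 1 1 2 rfl) ∘ₗ LinearMap.fst k (LMod k 1 1) (LMod k 2 0) ∘ₗ LinearMap.snd k (LMod k 0 2) (LMod k 1 1 × LMod k 2 0)
  | ⟨6, _⟩ => Finsupp.lapply (bAt 1 1 10 rfl) ∘ₗ LinearMap.fst k (LMod k 1 1) (LMod k 2 0) ∘ₗ LinearMap.snd k (LMod k 0 2) (LMod k 1 1 × LMod k 2 0)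
  | ⟨7, _⟩ => Finsupp.lapply (bAt 1 1 6 rfl) ∘ₗ LinearMap.fst k (LMod k 1 1) (LMod k 2 0) ∘ₗ LinearMap.snd k (LMod k 0 2) (LMod k 1 1 × LMod k 2 0)
  | ⟨8, _⟩ => Finsupp.lapply (bAt 1 1 14 rfl) ∘ₗ LinearMap.fst k (LMod k 1 1) (LMod k 2 0) ∘ₗ LinearMap.snd k (LMod k 0 2) (LMod k 1 1 × LMod k 2 0)
  | ⟨9, _⟩ => Finsupp.lapply (bAt 2 0 4 rfl) ∘ₗ LinearMap.snd k (LMod k 1 1) (LMod k 2 0) ∘ₗ LinearMap.snd k (LMod k 0 2) (LMod k 1 1 × LMod k 2 0)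
  | ⟨10, _⟩ => Finsupp.lapply (bAt 2 0 2 rfl) ∘ₗ LinearMap.snd k (LMod k 1 1) (LMod k 2 0) ∘ₗ LinearMap.snd k (LMod k 0 2) (LMod k 1 1 × LMod k 2 0)

def coordL : (LMod k 0 2 × LMod k 1 1 × LMod k 2 0) →ₗ[k] (Fin 11 → k) :=
  LinearMap.pi (coordF k)

lemma coordL_castF2 (w : (LBasis 0 2 → ℤ) × (LBasis 1 1 → ℤ) × (LBasis 2 0 → ℤ)) (j : Fin 11) :
    coordL k (castF2 k w) j = ((coordZ w j : ℤ) : k) := by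
  fin_cases j <;>
    simp [coordL, coordZ, coordF, castF2, castF_apply, LinearMap.pi_apply, Finsupp.lapply_apply]

def U0v : (LBasis 0 2 → ℤ) × (LBasis 1 1 → ℤ) × (LBasis 2 0 → ℤ) :=
  (ofL 0 2 [1, 0, 0, 0, 0, 0, 0, 0], ofL 1 1 [0, 0, 0, 0, 0, 0, 0, 0, 0, 0, 0, 0, 0, 0, 0, 0], ofL 2 0 [0, 0, 0, 0, 0, 0, 0, 0])

def U1v : (LBasis 0 2 → ℤ) × (LBasis 1 1 → ℤ) × (LBasis 2 0 → ℤ) :=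
  (ofL 0 2 [0, 0, 0, 0, 0, 0, 0, 0], ofL 1 1 [0, 0, 0, 0, 0, 0, 0, 0, 0, 0, 0, 0, 0, 0, 0, 0], ofL 2 0 [1, 0, 0, 0, 0, 0, 0, 0])

def Uv : Fin 2 → (LBasis 0 2 → ℤ) × (LBasis 1 1 → ℤ) × (LBasis 2 0 → ℤ) := ![U0v, U1v]

def coordZ1 (w : (LBasis 0 1 → ℤ) × (LBasis 1 0 → ℤ)) : Fin 2 → ℤ
  | ⟨0, _⟩ => w.1 (bAt 0 1 0 rfl)
  | ⟨1, _⟩ => w.2 (bAt 1 0 0 rfl)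

lemma hD5 : ∀ i j : Fin 2, coordZ1 (d21Z (Uv i)) j = if j = i then 1 else 0 := by decide

def coordF1 : Fin 2 → ((LMod k 0 1 × LMod k 1 0) →ₗ[k] k)
  | ⟨0, _⟩ => Finsupp.lapply (bAt 0 1 0 rfl) ∘ₗ LinearMap.fst k (LMod k 0 1) (LMod k 1 0)
  | ⟨1, _⟩ => Finsupp.lapply (bAt 1 0 0 rfl) ∘ₗ LinearMap.snd k (LMod k 0 1) (LMod k 1 0)

def coordL1 : (LMod k 0 1 × LMod k 1 0) →ₗ[k] (Fin 2 → k) :=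
  LinearMap.pi (coordF1 k)

lemma coordL1_castF1 (w : (LBasis 0 1 → ℤ) × (LBasis 1 0 → ℤ)) (j : Fin 2) :
    coordL1 k (castF1 k w) j = ((coordZ1 w j : ℤ) : k) := by
  fin_cases j <;>
    simp [coordL1, coordZ1, coordF1, castF1, castF_apply, LinearMap.pi_apply, Finsupp.lapply_apply]

lemma castF1_zero : castF1 k (fun _ => 0, fun _ => 0) = 0 :=
  Prod.ext (castF_zero k 0 1) (castF_zero k 1 0)

end LodayTorus

open LodayTorus


/-- for an odd prime `p`, in the bicomplex for the Loday construction of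
`𝔽_p[t]/t²` over `𝔽_p` with `𝔽_p`-coefficients on the torus `S¹ × S¹` (whose bidegree-`(1,1)`
cycles include the five matrices `[[1,t],[t,t]]`, `[[1,t],[t,1]]`, `[[1,t],[1,t]]`,
`[[1,1],[t,t]]`, `[[1,1],[1,t]]`), the homology in total degree 2 is at most 3-dimensional
over `𝔽_p`. -/
theorem stmt12 (p : ℕ) [Fact p.Prime] (hodd : Odd p) :
    Module.finrank (ZMod p) (LodayTorus.H2 (ZMod p)) ≤ 3 := by
  classical
  set k := ZMod p with hk
  have hp : p.Prime := Fact.out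
  have hp2 : (2 : k) ≠ 0 := by
    intro h
    have h2 : ((2 : ℕ) : ZMod p) = 0 := by exact_mod_cast h
    have hdvd : p ∣ 2 := (CharP.cast_eq_zero_iff (ZMod p) p 2).mp h2
    have hle := Nat.le_of_dvd (by norm_num) hdvd
    have h2le := hp.two_le
    rw [Nat.odd_iff] at hodd
    have hp2' : p = 2 := le_antisymm hle h2le
    omega
  -- the 11 independent boundary cycles
  set x : Fin 11 → (LMod k 0 2 × LMod k 1 1 × LMod k 2 0) := fun i => castF2 k (Wv i) with hx
  have hxrange : ∀ i, x i ∈ LinearMap.range (d32 k) := by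
    intro i
    exact ⟨castF3 k (Yv i), by rw [d32_castF, hD1 i]⟩
  have hxker : ∀ i, x i ∈ LinearMap.ker (d21 k) := by
    intro i
    rw [LinearMap.mem_ker]
    show d21 k (castF2 k (Wv i)) = 0
    rw [d21_castF, hD2 i, castF1_zero]
  have hcoord : ∀ i j, coordL k (x i) j = if j = i then (2 : k) else 0 := by
    intro i j
    show coordL k (castF2 k (Wv i)) j = _
    rw [coordL_castF2, hD3 i j]
    split_ifs <;> simp
  have hxind : LinearIndependent k x := by
    rw [Fintype.linearIndependent_iff]
    intro g hg j
    have h1 : coordL k (∑ i, g i • x i) = 0 := by rw [hg, map_zero]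
    rw [map_sum] at h1
    have h2 := congrFun h1 j
    simp only [map_smul, Finset.sum_apply, Pi.smul_apply, Pi.zero_apply, smul_eq_mul,
      hcoord] at h2
    simp only [mul_ite, mul_zero, Finset.sum_ite_eq, Finset.mem_univ, if_true] at h2
    exact (mul_eq_zero.mp h2).resolve_right hp2
  -- the 2 independent image vectors for d21
  set y : Fin 2 → (LMod k 0 1 × LMod k 1 0) := fun i => d21 k (castF2 k (Uv i)) with hy
  have hyrange : ∀ i, y i ∈ LinearMap.range (d21 k) := fun i => ⟨_, rfl⟩
  have hycoord : ∀ i j, coordL1 k (y i) j = if j = i then (1 : k) else 0 := by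
    intro i j
    show coordL1 k (d21 k (castF2 k (Uv i))) j = _
    rw [d21_castF, coordL1_castF1, hD5 i j]
    split_ifs <;> simp
  have hyind : LinearIndependent k y := by
    rw [Fintype.linearIndependent_iff]
    intro g hg j
    have h1 : coordL1 k (∑ i, g i • y i) = 0 := by rw [hg, map_zero]
    rw [map_sum] at h1
    have h2 := congrFun h1 j
    simp only [map_smul, Finset.sum_apply, Pi.smul_apply, Pi.zero_apply, smul_eq_mul, hycoord] at h2
    simp only [mul_ite, mul_one, mul_zero, Finset.sum_ite_eq, Finset.mem_univ, if_true] at h2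
    exact h2
  -- dimension count
  have hdim2 : Module.finrank k (LMod k 0 2 × LMod k 1 1 × LMod k 2 0) = 16 := by
    rw [Module.finrank_prod, Module.finrank_prod, Module.finrank_finsupp_self,
      Module.finrank_finsupp_self, Module.finrank_finsupp_self]
    rfl
  have hy_le : Submodule.span k (Set.range y) ≤ LinearMap.range (d21 k) :=
    Submodule.span_le.mpr (by rintro _ ⟨i, rfl⟩; exact hyrange i)
  have h2rank : 2 ≤ Module.finrank k ↥(LinearMap.range (d21 k)) := by
    have hmono := Submodule.finrank_mono (R := k) hy_le
    rwa [finrank_span_eq_card hyind, Fintype.card_fin] at hmono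
  have hkerle : Module.finrank k ↥(LinearMap.ker (d21 k)) ≤ 14 := by
    have hrn := LinearMap.finrank_range_add_finrank_ker (d21 k)
    rw [hdim2] at hrn
    omega
  set N := Submodule.comap (LinearMap.ker (d21 k)).subtype (LinearMap.range (d32 k)) with hN
  set xs : Fin 11 → ↥(LinearMap.ker (d21 k)) := fun i => ⟨x i, hxker i⟩ with hxs
  have hxsind : LinearIndependent k xs :=
    LinearIndependent.of_comp (LinearMap.ker (d21 k)).subtype hxind
  have hxsN : ∀ i, xs i ∈ N := fun i => by
    rw [hN, Submodule.mem_comap]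
    exact hxrange i
  have hspan : Submodule.span k (Set.range xs) ≤ N :=
    Submodule.span_le.mpr (by rintro _ ⟨i, rfl⟩; exact hxsN i)
  have h11 : 11 ≤ Module.finrank k ↥N := by
    have hmono := Submodule.finrank_mono (R := k) hspan
    rwa [finrank_span_eq_card hxsind, Fintype.card_fin] at hmono
  have hq := Submodule.finrank_quotient_add_finrank N
  show Module.finrank k (↥(LinearMap.ker (d21 k)) ⧸ N) ≤ 3
  omega

end
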